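/- Let β₀ take value μ₁ = -√(ε/(1-ε)) with probability 1-ε and μ₂ = √((1-ε)/ε) with probability ε, and let N ~ N(0,1) be independent. Then the MMSE of estimating β₀ from √s·β₀ + N equals E[ 1 / (1 - ε + ε·exp( s/(2ε(1-ε)) + √(s/(ε(1-ε)))·N )) ]. -/

import Mathlib

open MeasureTheory ProbabilityTheory Real
open scoped ENNReal NNReal

namespace TwoPointMMSE


lemma gauss_int (m : ℝ) (h : ℝ → ℝ) :
    ∫ x, h x ∂(gaussianReal m 1) = ∫ x, h x * gaussianPDFReal m 1 x := by
  rw [gaussianReal_of_var_ne_zero m one_ne_zero, gaussianPDF_def]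
  have : (fun x => ENNReal.ofReal (gaussianPDFReal m 1 x))
      = fun x => ((gaussianPDFReal m 1 x).toNNReal : ℝ≥0∞) := rfl
  rw [this, integral_withDensity_eq_integral_smul
    (by exact (measurable_gaussianPDFReal m 1).real_toNNReal) h]
  congr 1
  ext x
  rw [NNReal.smul_def, smul_eq_mul, Real.coe_toNNReal _ (gaussianPDFReal_nonneg m 1 x), mul_comm]

lemma split {Ω : Type*} [MeasurableSpace Ω] (P : Measure Ω) [IsProbabilityMeasure P]
    (β₀ N : Ω → ℝ) (hβ : Measurable β₀) (hN : Measurable N)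
    (hNlaw : Measure.map N P = gaussianReal 0 1)
    (m₁ m₂ p q : ℝ) (hne : m₁ ≠ m₂) (hp : 0 ≤ p) (hq : 0 ≤ q)
    (hβlaw : Measure.map β₀ P =
      ENNReal.ofReal p • Measure.dirac m₁ + ENNReal.ofReal q • Measure.dirac m₂)
    (hindep : IndepFun β₀ N P)
    (F : ℝ → ℝ → ℝ) (hF : Measurable (Function.uncurry F)) (C : ℝ)
    (h1 : ∀ n, |F m₁ n| ≤ C) (h2 : ∀ n, |F m₂ n| ≤ C) :
    ∫ ω, F (β₀ ω) (N ω) ∂P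
      = p * ∫ n, F m₁ n ∂(gaussianReal 0 1) + q * ∫ n, F m₂ n ∂(gaussianReal 0 1) := by
  classical
  set γ : Measure ℝ := gaussianReal 0 1 with hγ
  set ρ : ℝ → ℝ := fun b => if b = m₂ then m₂ else m₁ with hρdef
  have hρ : Measurable ρ := Measurable.ite (measurableSet_eq) measurable_const measurable_const
  set G : ℝ → ℝ → ℝ := fun b n => F (ρ b) n with hGdef
  have hρ1 : ρ m₁ = m₁ := if_neg hne
  have hρ2 : ρ m₂ = m₂ := if_pos rfl
  have hGm : Measurable (Function.uncurry G) := by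
    have : Function.uncurry G = (Function.uncurry F) ∘ (fun z : ℝ × ℝ => (ρ z.1, z.2)) := rfl
    rw [this]
    exact hF.comp ((hρ.comp measurable_fst).prodMk measurable_snd)
  have hGb : ∀ b n, |G b n| ≤ C := by
    intro b n
    by_cases h : b = m₂
    · simpa [hGdef, hρdef, h] using h2 n
    · simpa [hGdef, hρdef, h] using h1 n
  -- a.e. β₀ takes values in {m₁, m₂}
  have hae : ∀ᵐ ω ∂P, β₀ ω = m₁ ∨ β₀ ω = m₂ := by
    rw [ae_iff]
    have hset : {ω | ¬(β₀ ω = m₁ ∨ β₀ ω = m₂)} = β₀ ⁻¹' ({m₁, m₂} : Set ℝ)ᶜ := by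
      ext ω; simp [not_or]
    rw [hset, ← Measure.map_apply hβ ((MeasurableSet.insert (measurableSet_singleton m₂) m₁).compl),
      hβlaw]
    simp [Measure.dirac_apply', Set.indicator_of_notMem]
  have step1 : ∫ ω, F (β₀ ω) (N ω) ∂P = ∫ ω, G (β₀ ω) (N ω) ∂P := by
    refine integral_congr_ae (hae.mono fun ω h => ?_)
    rcases h with h | h <;> simp [hGdef, h, hρ1, hρ2]
  have hpair : AEMeasurable (fun ω => (β₀ ω, N ω)) P := (hβ.prodMk hN).aemeasurable
  have hprod : Measure.map (fun ω => (β₀ ω, N ω)) P = (Measure.map β₀ P).prod (Measure.map N P) :=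
    (indepFun_iff_map_prod_eq_prod_map_map hβ.aemeasurable hN.aemeasurable).mp hindep
  haveI : IsProbabilityMeasure (Measure.map β₀ P) := Measure.isProbabilityMeasure_map hβ.aemeasurable
  haveI : IsProbabilityMeasure (Measure.map N P) := Measure.isProbabilityMeasure_map hN.aemeasurable
  have step2 : ∫ ω, G (β₀ ω) (N ω) ∂P
      = ∫ z, Function.uncurry G z ∂((Measure.map β₀ P).prod (Measure.map N P)) := by
    rw [← hprod, integral_map hpair hGm.aestronglyMeasurable]
    rfl
  have hint : Integrable (Function.uncurry G) ((Measure.map β₀ P).prod (Measure.map N P)) := by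
    refine (integrable_const C).mono' hGm.aestronglyMeasurable (ae_of_all _ fun z => ?_)
    rw [Real.norm_eq_abs]; exact hGb z.1 z.2
  have step3 : ∫ z, Function.uncurry G z ∂((Measure.map β₀ P).prod (Measure.map N P))
      = ∫ b, ∫ n, G b n ∂γ ∂(Measure.map β₀ P) := by
    rw [MeasureTheory.integral_prod _ hint, hNlaw]
    rfl
  set H : ℝ → ℝ := fun b => ∫ n, G b n ∂γ with hHdef
  have HSM : StronglyMeasurable H := by
    have := hGm.stronglyMeasurable.integral_prod_right' (ν := γ)
    exact this
  have Hb : ∀ b, ‖H b‖ ≤ C := by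
    intro b
    calc ‖H b‖ ≤ C * (γ Set.univ).toReal :=
          norm_integral_le_of_norm_le_const (ae_of_all _ fun n => by
            simpa [Real.norm_eq_abs] using hGb b n)
      _ = C := by simp
  have IHd : ∀ x : ℝ, Integrable H (Measure.dirac x) :=
    fun x => (integrable_const C).mono' HSM.aestronglyMeasurable (ae_of_all _ Hb)
  have step4 : ∫ b, H b ∂(Measure.map β₀ P) = p * H m₁ + q * H m₂ := by
    rw [hβlaw, integral_add_measure ((IHd m₁).smul_measure ENNReal.ofReal_ne_top)
      ((IHd m₂).smul_measure ENNReal.ofReal_ne_top),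
      integral_smul_measure, integral_smul_measure,
      integral_dirac' H m₁ HSM, integral_dirac' H m₂ HSM,
      ENNReal.toReal_ofReal hp, ENNReal.toReal_ofReal hq, smul_eq_mul, smul_eq_mul]
  have hH1 : H m₁ = ∫ n, F m₁ n ∂γ := by
    simp only [hHdef, hGdef, hρ1]
  have hH2 : H m₂ = ∫ n, F m₂ n ∂γ := by
    simp only [hHdef, hGdef, hρ2]
  rw [step1, step2, step3, step4, hH1, hH2]



noncomputable def mu1 (ε : ℝ) : ℝ := -Real.sqrt (ε / (1 - ε))
noncomputable def mu2 (ε : ℝ) : ℝ := Real.sqrt ((1 - ε) / ε)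
noncomputable def aa (ε s : ℝ) : ℝ := s / (2 * ε * (1 - ε))
noncomputable def cc (ε s : ℝ) : ℝ := Real.sqrt (s / (ε * (1 - ε)))

noncomputable def g (ε s y : ℝ) : ℝ :=
  ((1 - ε) * mu1 ε * gaussianPDFReal (Real.sqrt s * mu1 ε) 1 y
      + ε * mu2 ε * gaussianPDFReal (Real.sqrt s * mu2 ε) 1 y)
    / ((1 - ε) * gaussianPDFReal (Real.sqrt s * mu1 ε) 1 y
      + ε * gaussianPDFReal (Real.sqrt s * mu2 ε) 1 y)

variable {ε s : ℝ}

lemma mu_lt (hε : ε ∈ Set.Ioo (0:ℝ) 1) : mu1 ε < mu2 ε := by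
  have h1 : 0 < ε := hε.1
  have h2 : 0 < 1 - ε := by linarith [hε.2]
  have : 0 < mu2 ε := Real.sqrt_pos.mpr (by positivity)
  have : mu1 ε ≤ 0 := neg_nonpos.mpr (Real.sqrt_nonneg _)
  linarith

lemma mu_ne (hε : ε ∈ Set.Ioo (0:ℝ) 1) : mu1 ε ≠ mu2 ε := ne_of_lt (mu_lt hε)

lemma mu_diff (hε : ε ∈ Set.Ioo (0:ℝ) 1) :
    mu2 ε - mu1 ε = 1 / Real.sqrt (ε * (1 - ε)) := by
  have h1 : 0 < ε := hε.1
  have h2 : 0 < 1 - ε := by linarith [hε.2]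
  have s1 : 0 < Real.sqrt ε := Real.sqrt_pos.mpr h1
  have s2 : 0 < Real.sqrt (1 - ε) := Real.sqrt_pos.mpr h2
  have e1 : Real.sqrt (ε / (1 - ε)) = Real.sqrt ε / Real.sqrt (1 - ε) :=
    Real.sqrt_div h1.le _
  have e2 : Real.sqrt ((1 - ε) / ε) = Real.sqrt (1 - ε) / Real.sqrt ε := Real.sqrt_div h2.le _
  have e3 : Real.sqrt (ε * (1 - ε)) = Real.sqrt ε * Real.sqrt (1 - ε) := Real.sqrt_mul h1.le _
  have m1 : Real.sqrt ε * Real.sqrt ε = ε := Real.mul_self_sqrt h1.le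
  have m2 : Real.sqrt (1 - ε) * Real.sqrt (1 - ε) = 1 - ε := Real.mul_self_sqrt h2.le
  rw [mu1, mu2, e1, e2, e3]
  field_simp
  nlinarith [m1, m2]

lemma mu_sq (hε : ε ∈ Set.Ioo (0:ℝ) 1) : (mu2 ε - mu1 ε) ^ 2 = 1 / (ε * (1 - ε)) := by
  have h1 : 0 < ε := hε.1
  have h2 : 0 < 1 - ε := by linarith [hε.2]
  rw [mu_diff hε, div_pow, one_pow, Real.sq_sqrt (by positivity)]

lemma c_eq (hε : ε ∈ Set.Ioo (0:ℝ) 1) (hs : 0 < s) :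
    Real.sqrt s * (mu2 ε - mu1 ε) = cc ε s := by
  have h1 : 0 < ε := hε.1
  have h2 : 0 < 1 - ε := by linarith [hε.2]
  rw [mu_diff hε, cc, Real.sqrt_div hs.le]
  ring

lemma c_sq (hε : ε ∈ Set.Ioo (0:ℝ) 1) (hs : 0 < s) : cc ε s ^ 2 = 2 * aa ε s := by
  have h1 : 0 < ε := hε.1
  have h2 : 0 < 1 - ε := by linarith [hε.2]
  rw [cc, Real.sq_sqrt (by positivity), aa]
  field_simp

lemma phi_ratio (m₁ m₂ y : ℝ) :
    gaussianPDFReal m₂ 1 y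
      = gaussianPDFReal m₁ 1 y * Real.exp (((y - m₁) ^ 2 - (y - m₂) ^ 2) / 2) := by
  simp only [gaussianPDFReal, NNReal.coe_one, mul_one]
  rw [mul_assoc, ← Real.exp_add]
  congr 1
  ring

lemma phi21 (hε : ε ∈ Set.Ioo (0:ℝ) 1) (hs : 0 < s) (n : ℝ) :
    gaussianPDFReal (Real.sqrt s * mu2 ε) 1 (Real.sqrt s * mu1 ε + n)
      = gaussianPDFReal (Real.sqrt s * mu1 ε) 1 (Real.sqrt s * mu1 ε + n)
        * Real.exp (cc ε s * n - aa ε s) := by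
  rw [phi_ratio (Real.sqrt s * mu1 ε)]
  congr 1
  have h := c_eq hε hs
  have h2 := c_sq hε hs
  have hd : Real.sqrt s * mu1 ε + n - Real.sqrt s * mu2 ε = n - cc ε s := by
    nlinarith [h]
  rw [hd]
  have hd2 : Real.sqrt s * mu1 ε + n - Real.sqrt s * mu1 ε = n := by ring
  rw [hd2]
  congr 1
  linear_combination (-1/2 : ℝ) * h2

lemma phi12 (hε : ε ∈ Set.Ioo (0:ℝ) 1) (hs : 0 < s) (n : ℝ) :
    gaussianPDFReal (Real.sqrt s * mu1 ε) 1 (Real.sqrt s * mu2 ε + n)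
      = gaussianPDFReal (Real.sqrt s * mu2 ε) 1 (Real.sqrt s * mu2 ε + n)
        * Real.exp (-(cc ε s * n) - aa ε s) := by
  rw [phi_ratio (Real.sqrt s * mu2 ε)]
  congr 1
  have h := c_eq hε hs
  have h2 := c_sq hε hs
  have hd : Real.sqrt s * mu2 ε + n - Real.sqrt s * mu1 ε = n + cc ε s := by
    nlinarith [h]
  rw [hd]
  have hd2 : Real.sqrt s * mu2 ε + n - Real.sqrt s * mu2 ε = n := by ring
  rw [hd2]
  congr 1
  linear_combination (-1/2 : ℝ) * h2

lemma den_pos (hε : ε ∈ Set.Ioo (0:ℝ) 1) (y : ℝ) :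
    0 < (1 - ε) * gaussianPDFReal (Real.sqrt s * mu1 ε) 1 y
      + ε * gaussianPDFReal (Real.sqrt s * mu2 ε) 1 y := by
  have h1 : 0 < ε := hε.1
  have h2 : 0 < 1 - ε := by linarith [hε.2]
  have p1 := gaussianPDFReal_pos (Real.sqrt s * mu1 ε) 1 y one_ne_zero
  have p2 := gaussianPDFReal_pos (Real.sqrt s * mu2 ε) 1 y one_ne_zero
  positivity

lemma g_meas : Measurable (g ε s) := by
  unfold g
  exact (((measurable_const.mul (measurable_gaussianPDFReal _ 1)).add
      (measurable_const.mul (measurable_gaussianPDFReal _ 1))).div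
    ((measurable_const.mul (measurable_gaussianPDFReal _ 1)).add
      (measurable_const.mul (measurable_gaussianPDFReal _ 1))))

lemma g_bound (hε : ε ∈ Set.Ioo (0:ℝ) 1) (y : ℝ) :
    |g ε s y| ≤ |mu1 ε| + |mu2 ε| := by
  have h1 : 0 < ε := hε.1
  have h2 : 0 < 1 - ε := by linarith [hε.2]
  have p1 := gaussianPDFReal_pos (Real.sqrt s * mu1 ε) 1 y one_ne_zero
  have p2 := gaussianPDFReal_pos (Real.sqrt s * mu2 ε) 1 y one_ne_zero
  have hd := den_pos (s := s) hε y
  rw [g, abs_div, abs_of_pos hd, div_le_iff₀ hd]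
  have hnum : |(1 - ε) * mu1 ε * gaussianPDFReal (Real.sqrt s * mu1 ε) 1 y
      + ε * mu2 ε * gaussianPDFReal (Real.sqrt s * mu2 ε) 1 y|
      ≤ (1 - ε) * |mu1 ε| * gaussianPDFReal (Real.sqrt s * mu1 ε) 1 y
      + ε * |mu2 ε| * gaussianPDFReal (Real.sqrt s * mu2 ε) 1 y := by
    refine (abs_add_le _ _).trans ?_
    rw [abs_mul, abs_mul, abs_mul, abs_mul, abs_of_pos h2, abs_of_pos h1,
      abs_of_pos p1, abs_of_pos p2]
  refine hnum.trans ?_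
  nlinarith [mul_nonneg (abs_nonneg (mu2 ε)) (mul_pos h2 p1).le,
    mul_nonneg (abs_nonneg (mu1 ε)) (mul_pos h1 p2).le]

lemma g1 (hε : ε ∈ Set.Ioo (0:ℝ) 1) (hs : 0 < s) (n : ℝ) :
    mu1 ε - g ε s (Real.sqrt s * mu1 ε + n)
      = (mu1 ε - mu2 ε) * (ε / (ε + (1 - ε) * Real.exp (aa ε s - cc ε s * n))) := by
  have h1 : 0 < ε := hε.1
  have h2 : 0 < 1 - ε := by linarith [hε.2]
  have p1 := gaussianPDFReal_pos (Real.sqrt s * mu1 ε) 1 (Real.sqrt s * mu1 ε + n) one_ne_zero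
  set A := gaussianPDFReal (Real.sqrt s * mu1 ε) 1 (Real.sqrt s * mu1 ε + n) with hA
  set E := Real.exp (cc ε s * n - aa ε s) with hE
  have hEpos : 0 < E := Real.exp_pos _
  have hexp : Real.exp (aa ε s - cc ε s * n) = E⁻¹ := by
    rw [hE, ← Real.exp_neg]
    congr 1
    ring
  rw [g, phi21 hε hs, ← hA, ← hE, hexp]
  have hden1 : (1 - ε) * A + ε * (A * E) ≠ 0 := by positivity
  have hden2 : ε + (1 - ε) * E⁻¹ ≠ 0 := by positivity
  field_simp
  ring

lemma g2 (hε : ε ∈ Set.Ioo (0:ℝ) 1) (hs : 0 < s) (n : ℝ) :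
    mu2 ε - g ε s (Real.sqrt s * mu2 ε + n)
      = (mu2 ε - mu1 ε) * ((1 - ε) / ((1 - ε) + ε * Real.exp (aa ε s + cc ε s * n))) := by
  have h1 : 0 < ε := hε.1
  have h2 : 0 < 1 - ε := by linarith [hε.2]
  have p2 := gaussianPDFReal_pos (Real.sqrt s * mu2 ε) 1 (Real.sqrt s * mu2 ε + n) one_ne_zero
  set A := gaussianPDFReal (Real.sqrt s * mu2 ε) 1 (Real.sqrt s * mu2 ε + n) with hA
  set E := Real.exp (-(cc ε s * n) - aa ε s) with hE
  have hEpos : 0 < E := Real.exp_pos _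
  have hexp : Real.exp (aa ε s + cc ε s * n) = E⁻¹ := by
    rw [hE, ← Real.exp_neg]
    congr 1
    ring
  rw [g, phi12 hε hs, ← hA, ← hE, hexp]
  have hden1 : (1 - ε) * (A * E) + ε * A ≠ 0 := by positivity
  have hden2 : (1 - ε) + ε * E⁻¹ ≠ 0 := by positivity
  field_simp
  ring




lemma star (hε : ε ∈ Set.Ioo (0:ℝ) 1) (hs : 0 < s) :
    ∫ n : ℝ, (ε / (ε + (1 - ε) * Real.exp (aa ε s - cc ε s * n))) ^ 2 * gaussianPDFReal 0 1 n
      = ∫ n : ℝ, ε ^ 2 * Real.exp (aa ε s + cc ε s * n)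
          / ((1 - ε) + ε * Real.exp (aa ε s + cc ε s * n)) ^ 2 * gaussianPDFReal 0 1 n := by
  have h1 : 0 < ε := hε.1
  have h2 : 0 < 1 - ε := by linarith [hε.2]
  have hc2 := c_sq hε hs
  have key := integral_add_right_eq_self (μ := (volume : Measure ℝ))
    (fun n => (ε / (ε + (1 - ε) * Real.exp (aa ε s - cc ε s * n))) ^ 2
      * gaussianPDFReal 0 1 n) (cc ε s)
  rw [← key]
  refine integral_congr_ae (ae_of_all _ fun n => ?_)
  have hexp1 : Real.exp (aa ε s - cc ε s * (n + cc ε s))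
      = Real.exp (-(aa ε s + cc ε s * n)) := by
    congr 1
    linear_combination -hc2
  have hphi : gaussianPDFReal 0 1 (n + cc ε s)
      = gaussianPDFReal 0 1 n * Real.exp (-(aa ε s + cc ε s * n)) := by
    simp only [gaussianPDFReal, NNReal.coe_one, mul_one]
    rw [mul_assoc, ← Real.exp_add]
    congr 2
    linear_combination (-1/2 : ℝ) * hc2
  simp only [hexp1, hphi, Real.exp_neg]
  have hE : 0 < Real.exp (aa ε s + cc ε s * n) := Real.exp_pos _
  set E := Real.exp (aa ε s + cc ε s * n) with hEdef
  have d1 : ε + (1 - ε) * E⁻¹ ≠ 0 := by positivity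
  have d2 : (1 - ε) + ε * E ≠ 0 := by positivity
  field_simp
  ring

lemma gauss_key (hε : ε ∈ Set.Ioo (0:ℝ) 1) (hs : 0 < s) :
    (1/ε) * (∫ n : ℝ, (ε / (ε + (1 - ε) * Real.exp (aa ε s - cc ε s * n))) ^ 2
        * gaussianPDFReal 0 1 n)
      + (1/(1-ε)) * (∫ n : ℝ, ((1 - ε) / ((1 - ε) + ε * Real.exp (aa ε s + cc ε s * n))) ^ 2
        * gaussianPDFReal 0 1 n)
    = ∫ n : ℝ, 1 / ((1 - ε) + ε * Real.exp (aa ε s + cc ε s * n)) * gaussianPDFReal 0 1 n := by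
  have h1 : 0 < ε := hε.1
  have h2 : 0 < 1 - ε := by linarith [hε.2]
  rw [star hε hs]
  have hφint := integrable_gaussianPDFReal 0 1
  have hmE : Measurable (fun n : ℝ => Real.exp (aa ε s + cc ε s * n)) :=
    Real.measurable_exp.comp (measurable_const.add (measurable_const.mul measurable_id))
  have I1 : Integrable (fun n : ℝ => ε ^ 2 * Real.exp (aa ε s + cc ε s * n)
      / ((1 - ε) + ε * Real.exp (aa ε s + cc ε s * n)) ^ 2 * gaussianPDFReal 0 1 n) := by
    refine hφint.bdd_mul (c := ε / (4 * (1 - ε))) ?_ (ae_of_all _ fun n => ?_)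
    · exact ((measurable_const.mul hmE).div ((measurable_const.add
        (measurable_const.mul hmE)).pow_const 2)).aestronglyMeasurable
    · have hE : 0 < Real.exp (aa ε s + cc ε s * n) := Real.exp_pos _
      set E := Real.exp (aa ε s + cc ε s * n)
      have hD : 0 < (1 - ε) + ε * E := by positivity
      rw [Real.norm_eq_abs, abs_of_nonneg (by positivity), div_le_iff₀ (by positivity)]
      have key : 4 * (1 - ε) * (ε * E) ≤ ((1 - ε) + ε * E) ^ 2 := by
        nlinarith [sq_nonneg ((1 - ε) - ε * E)]
      have h3 : (0:ℝ) < 4 * (1 - ε) := by linarith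
      rw [div_mul_eq_mul_div, le_div_iff₀ h3]
      nlinarith [mul_le_mul_of_nonneg_left key h1.le]
  have I2 : Integrable (fun n : ℝ => ((1 - ε) / ((1 - ε) + ε * Real.exp (aa ε s + cc ε s * n))) ^ 2
      * gaussianPDFReal 0 1 n) := by
    refine hφint.bdd_mul (c := 1) ?_ (ae_of_all _ fun n => ?_)
    · exact ((measurable_const.div (measurable_const.add
        (measurable_const.mul hmE))).pow_const 2).aestronglyMeasurable
    · have hE : 0 < Real.exp (aa ε s + cc ε s * n) := Real.exp_pos _
      set E := Real.exp (aa ε s + cc ε s * n)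
      have hD : 0 < (1 - ε) + ε * E := by positivity
      rw [Real.norm_eq_abs, abs_of_nonneg (by positivity)]
      have : (1 - ε) / ((1 - ε) + ε * E) ≤ 1 := by
        rw [div_le_one hD]; nlinarith
      nlinarith [div_nonneg h2.le hD.le]
  rw [← integral_const_mul, ← integral_const_mul, ← integral_add (I1.const_mul _) (I2.const_mul _)]
  refine integral_congr_ae (ae_of_all _ fun n => ?_)
  have hE : 0 < Real.exp (aa ε s + cc ε s * n) := Real.exp_pos _
  set E := Real.exp (aa ε s + cc ε s * n)
  have hD : 0 < (1 - ε) + ε * E := by positivity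
  field_simp
  ring


end TwoPointMMSE
namespace TwoPointMMSE

lemma shift_int (m : ℝ) (h : ℝ → ℝ) (hh : Measurable h) :
    (∫ n, h (m + n) ∂(gaussianReal 0 1)) = ∫ y, h y * gaussianPDFReal m 1 y := by
  have hmap : Measure.map (fun n => m + n) (gaussianReal 0 1) = gaussianReal m 1 := by
    have := gaussianReal_map_const_add (μ := 0) (v := 1) m
    simpa using this
  calc ∫ n, h (m + n) ∂(gaussianReal 0 1)
      = ∫ y, h y ∂(Measure.map (fun n => m + n) (gaussianReal 0 1)) :=
        (integral_map (measurable_const.add measurable_id).aemeasurable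
          hh.aestronglyMeasurable).symm
    _ = ∫ y, h y ∂(gaussianReal m 1) := by rw [hmap]
    _ = ∫ y, h y * gaussianPDFReal m 1 y := gauss_int m h

end TwoPointMMSE

open TwoPointMMSE

theorem two_point_mmse_formula
    {Ω : Type*} [MeasurableSpace Ω] (P : Measure Ω) [IsProbabilityMeasure P]
    (ε s : ℝ) (hε : ε ∈ Set.Ioo (0:ℝ) 1) (hs : 0 < s)
    (β₀ N : Ω → ℝ) (hβ : Measurable β₀) (hN : Measurable N)
    (hNlaw : Measure.map N P = gaussianReal 0 1)
    (hβlaw : Measure.map β₀ P =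
      ENNReal.ofReal (1 - ε) • Measure.dirac (-Real.sqrt (ε / (1 - ε))) +
        ENNReal.ofReal ε • Measure.dirac (Real.sqrt ((1 - ε) / ε)))
    (hindep : IndepFun β₀ N P)
    (Y : Ω → ℝ) (hY : Y = fun ω => Real.sqrt s * β₀ ω + N ω) :
    ∫ ω, (β₀ ω - (P[β₀ | MeasurableSpace.comap Y Real.measurableSpace]) ω) ^ 2 ∂P
      = ∫ ω, 1 / (1 - ε + ε * Real.exp (s / (2 * ε * (1 - ε)) +
          Real.sqrt (s / (ε * (1 - ε))) * N ω)) ∂P := by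
  classical
  have h1 : 0 < ε := hε.1
  have h2 : 0 < 1 - ε := by linarith [hε.2]
  have hβlaw' : Measure.map β₀ P =
      ENNReal.ofReal (1 - ε) • Measure.dirac (mu1 ε) + ENNReal.ofReal ε • Measure.dirac (mu2 ε) :=
    hβlaw
  set M : ℝ := |mu1 ε| + |mu2 ε| with hM
  have hM0 : 0 ≤ M := by positivity
  have hYm : Measurable Y := by rw [hY]; exact (measurable_const.mul hβ).add hN
  have hm : MeasurableSpace.comap Y Real.measurableSpace ≤ _ := hYm.comap_le
  -- β₀ takes two values a.e.
  have hae : ∀ᵐ ω ∂P, β₀ ω = mu1 ε ∨ β₀ ω = mu2 ε := by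
    rw [ae_iff]
    have hset : {ω | ¬(β₀ ω = mu1 ε ∨ β₀ ω = mu2 ε)}
        = β₀ ⁻¹' ({mu1 ε, mu2 ε} : Set ℝ)ᶜ := by
      ext ω; simp [not_or]
    rw [hset, ← Measure.map_apply hβ
      ((MeasurableSet.insert (measurableSet_singleton (mu2 ε)) (mu1 ε)).compl), hβlaw']
    simp [Measure.dirac_apply', Set.indicator_of_notMem]
  have hβint : Integrable β₀ P := by
    refine (integrable_const M).mono' hβ.aestronglyMeasurable (hae.mono fun ω h => ?_)
    rcases h with h | h <;> rw [Real.norm_eq_abs, h, hM]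
    · linarith [abs_nonneg (mu2 ε)]
    · linarith [abs_nonneg (mu1 ε)]
  have hgY : Measurable fun ω => g ε s (Y ω) := g_meas.comp hYm
  have hgYint : Integrable (fun ω => g ε s (Y ω)) P :=
    (integrable_const M).mono' hgY.aestronglyMeasurable
      (ae_of_all _ fun ω => by simpa [Real.norm_eq_abs] using g_bound hε (Y ω))
  -- identification of the conditional expectation
  have hcond : (fun ω => g ε s (Y ω))
      =ᵐ[P] P[β₀ | MeasurableSpace.comap Y Real.measurableSpace] := by
    refine ae_eq_condExp_of_forall_setIntegral_eq hm hβint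
      (fun A _ _ => hgYint.integrableOn) (fun A hA _ => ?_)
      (StronglyMeasurable.aestronglyMeasurable
        (Measurable.stronglyMeasurable (g_meas.comp (comap_measurable Y))))
    obtain ⟨B, hB, rfl⟩ := hA
    have hpre : MeasurableSet (Y ⁻¹' B) := hYm hB
    have e1 : ∫ ω in Y ⁻¹' B, g ε s (Y ω) ∂P = ∫ ω, B.indicator (g ε s) (Y ω) ∂P := by
      rw [← integral_indicator hpre]
      congr 1
    have e1' : ∫ ω in Y ⁻¹' B, β₀ ω ∂P
        = ∫ ω, β₀ ω * B.indicator (fun _ => (1:ℝ)) (Y ω) ∂P := by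
      rw [← integral_indicator hpre]
      congr 1
      ext ω
      by_cases h : Y ω ∈ B <;> simp [Set.indicator, h]
    rw [e1, e1']
    have hsp1 : ∫ ω, B.indicator (g ε s) (Y ω) ∂P
        = (1 - ε) * (∫ n, B.indicator (g ε s) (Real.sqrt s * mu1 ε + n) ∂(gaussianReal 0 1))
          + ε * (∫ n, B.indicator (g ε s) (Real.sqrt s * mu2 ε + n) ∂(gaussianReal 0 1)) := by
      have hYrw : ∀ ω, B.indicator (g ε s) (Y ω)
          = B.indicator (g ε s) (Real.sqrt s * β₀ ω + N ω) := by
        intro ω; rw [hY]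
      simp only [hYrw]
      refine split P β₀ N hβ hN hNlaw (mu1 ε) (mu2 ε) (1 - ε) ε (mu_ne hε) h2.le h1.le
        hβlaw' hindep (fun b n => B.indicator (g ε s) (Real.sqrt s * b + n)) ?_ M ?_ ?_
      · exact (g_meas.indicator hB).comp
          ((measurable_const.mul measurable_fst).add measurable_snd)
      · intro n
        by_cases h : Real.sqrt s * mu1 ε + n ∈ B
        · simpa [Set.indicator, h] using g_bound hε (Real.sqrt s * mu1 ε + n)
        · simpa [Set.indicator, h] using hM0
      · intro n
        by_cases h : Real.sqrt s * mu2 ε + n ∈ B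
        · simpa [Set.indicator, h] using g_bound hε (Real.sqrt s * mu2 ε + n)
        · simpa [Set.indicator, h] using hM0
    have hsp2 : ∫ ω, β₀ ω * B.indicator (fun _ => (1:ℝ)) (Y ω) ∂P
        = (1 - ε) * (∫ n, mu1 ε * B.indicator (fun _ => (1:ℝ))
              (Real.sqrt s * mu1 ε + n) ∂(gaussianReal 0 1))
          + ε * (∫ n, mu2 ε * B.indicator (fun _ => (1:ℝ))
              (Real.sqrt s * mu2 ε + n) ∂(gaussianReal 0 1)) := by
      have hYrw : ∀ ω, β₀ ω * B.indicator (fun _ => (1:ℝ)) (Y ω)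
          = β₀ ω * B.indicator (fun _ => (1:ℝ)) (Real.sqrt s * β₀ ω + N ω) := by
        intro ω; rw [hY]
      simp only [hYrw]
      refine split P β₀ N hβ hN hNlaw (mu1 ε) (mu2 ε) (1 - ε) ε (mu_ne hε) h2.le h1.le
        hβlaw' hindep
        (fun b n => b * B.indicator (fun _ => (1:ℝ)) (Real.sqrt s * b + n)) ?_ M ?_ ?_
      · exact measurable_fst.mul ((measurable_const.indicator hB).comp
          ((measurable_const.mul measurable_fst).add measurable_snd))
      · intro n
        by_cases h : Real.sqrt s * mu1 ε + n ∈ B <;>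
          simp [Set.indicator, h, abs_nonneg, hM, abs_nonneg (mu2 ε), le_add_of_nonneg_right,
            hM0] <;> positivity
      · intro n
        by_cases h : Real.sqrt s * mu2 ε + n ∈ B <;>
          simp [Set.indicator, h, hM, abs_nonneg (mu1 ε), le_add_of_nonneg_left, hM0] <;> positivity
    rw [hsp1, hsp2]
    have conv1 : ∀ m : ℝ, (∫ n, B.indicator (g ε s) (m + n) ∂(gaussianReal 0 1))
        = ∫ y in B, g ε s y * gaussianPDFReal m 1 y := by
      intro m
      rw [shift_int m _ (g_meas.indicator hB), ← integral_indicator hB]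
      congr 1
      ext y
      by_cases h : y ∈ B <;> simp [Set.indicator, h]
    have conv2 : ∀ m μ : ℝ, (∫ n, μ * B.indicator (fun _ => (1:ℝ)) (m + n) ∂(gaussianReal 0 1))
        = ∫ y in B, μ * gaussianPDFReal m 1 y := by
      intro m μ
      rw [shift_int m (fun y => μ * B.indicator (fun _ => (1:ℝ)) y) (measurable_const.mul (measurable_const.indicator hB)),
        ← integral_indicator hB]
      congr 1
      ext y
      by_cases h : y ∈ B <;> simp [Set.indicator, h]
    rw [conv1, conv1, conv2, conv2]
    -- combine set integrals and compare pointwise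
    have hφ1 : Integrable (gaussianPDFReal (Real.sqrt s * mu1 ε) 1) :=
      integrable_gaussianPDFReal _ 1
    have hφ2 : Integrable (gaussianPDFReal (Real.sqrt s * mu2 ε) 1) :=
      integrable_gaussianPDFReal _ 1
    have hbd : ∃ C, ∀ y, ‖g ε s y‖ ≤ C :=
      ⟨M, fun y => by simpa [Real.norm_eq_abs] using g_bound hε (y := y)⟩
    have I1 : IntegrableOn (fun y => (1 - ε) * (g ε s y * gaussianPDFReal
        (Real.sqrt s * mu1 ε) 1 y)) B :=
      (((hφ1.bdd_mul g_meas.aestronglyMeasurable (ae_of_all _ hbd.choose_spec)).const_mul _)).integrableOn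
    have I2 : IntegrableOn (fun y => ε * (g ε s y * gaussianPDFReal
        (Real.sqrt s * mu2 ε) 1 y)) B :=
      (((hφ2.bdd_mul g_meas.aestronglyMeasurable (ae_of_all _ hbd.choose_spec)).const_mul _)).integrableOn
    have I3 : IntegrableOn (fun y => (1 - ε) * (mu1 ε * gaussianPDFReal
        (Real.sqrt s * mu1 ε) 1 y)) B :=
      (((hφ1.const_mul _).const_mul _)).integrableOn
    have I4 : IntegrableOn (fun y => ε * (mu2 ε * gaussianPDFReal
        (Real.sqrt s * mu2 ε) 1 y)) B :=
      (((hφ2.const_mul _).const_mul _)).integrableOn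
    rw [← integral_const_mul, ← integral_const_mul, ← integral_const_mul, ← integral_const_mul,
      ← integral_add I1 I2, ← integral_add I3 I4]
    refine setIntegral_congr_fun hB fun y _ => ?_
    have hden := den_pos (s := s) hε y
    have hg : g ε s y * ((1 - ε) * gaussianPDFReal (Real.sqrt s * mu1 ε) 1 y
        + ε * gaussianPDFReal (Real.sqrt s * mu2 ε) 1 y)
        = (1 - ε) * mu1 ε * gaussianPDFReal (Real.sqrt s * mu1 ε) 1 y
          + ε * mu2 ε * gaussianPDFReal (Real.sqrt s * mu2 ε) 1 y := by
      rw [g]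
      exact div_mul_cancel₀ _ hden.ne'
    linear_combination hg
  -- replace the conditional expectation
  have heq : (fun ω => (β₀ ω - (P[β₀ | MeasurableSpace.comap Y Real.measurableSpace]) ω) ^ 2)
      =ᵐ[P] fun ω => (β₀ ω - g ε s (Y ω)) ^ 2 :=
    hcond.mono fun ω h => by
      simpa using congrArg (fun t => (β₀ ω - t) ^ 2) h.symm
  rw [integral_congr_ae heq]
  -- split the left-hand side
  have hLsplit : ∫ ω, (β₀ ω - g ε s (Y ω)) ^ 2 ∂P
      = (1 - ε) * (∫ n, (mu1 ε - g ε s (Real.sqrt s * mu1 ε + n)) ^ 2 ∂(gaussianReal 0 1))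
        + ε * (∫ n, (mu2 ε - g ε s (Real.sqrt s * mu2 ε + n)) ^ 2 ∂(gaussianReal 0 1)) := by
    have hYrw : ∀ ω, (β₀ ω - g ε s (Y ω)) ^ 2
        = (β₀ ω - g ε s (Real.sqrt s * β₀ ω + N ω)) ^ 2 := by
      intro ω; rw [hY]
    simp only [hYrw]
    refine split P β₀ N hβ hN hNlaw (mu1 ε) (mu2 ε) (1 - ε) ε (mu_ne hε) h2.le h1.le
      hβlaw' hindep (fun b n => (b - g ε s (Real.sqrt s * b + n)) ^ 2) ?_ ((2 * M) ^ 2) ?_ ?_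
    · exact (measurable_fst.sub (g_meas.comp
        ((measurable_const.mul measurable_fst).add measurable_snd))).pow_const 2
    · intro n
      show |(mu1 ε - g ε s (Real.sqrt s * mu1 ε + n)) ^ 2| ≤ (2 * M) ^ 2
      have hb : |mu1 ε - g ε s (Real.sqrt s * mu1 ε + n)| ≤ 2 * M := by
        refine (abs_sub _ _).trans ?_
        have := g_bound hε (s := s) (Real.sqrt s * mu1 ε + n)
        rw [hM]
        linarith [abs_nonneg (mu2 ε)]
      calc |(mu1 ε - g ε s (Real.sqrt s * mu1 ε + n)) ^ 2|
          = |mu1 ε - g ε s (Real.sqrt s * mu1 ε + n)| ^ 2 := by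
            rw [abs_of_nonneg (sq_nonneg _), sq_abs]
        _ ≤ (2 * M) ^ 2 := pow_le_pow_left₀ (abs_nonneg _) hb 2
    · intro n
      show |(mu2 ε - g ε s (Real.sqrt s * mu2 ε + n)) ^ 2| ≤ (2 * M) ^ 2
      have hb : |mu2 ε - g ε s (Real.sqrt s * mu2 ε + n)| ≤ 2 * M := by
        refine (abs_sub _ _).trans ?_
        have := g_bound hε (s := s) (Real.sqrt s * mu2 ε + n)
        rw [hM]
        linarith [abs_nonneg (mu1 ε)]
      calc |(mu2 ε - g ε s (Real.sqrt s * mu2 ε + n)) ^ 2|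
          = |mu2 ε - g ε s (Real.sqrt s * mu2 ε + n)| ^ 2 := by
            rw [abs_of_nonneg (sq_nonneg _), sq_abs]
        _ ≤ (2 * M) ^ 2 := pow_le_pow_left₀ (abs_nonneg _) hb 2
  rw [hLsplit]
  -- rewrite the RHS as a Gaussian integral
  have hRmeas : Measurable fun n : ℝ => 1 / (1 - ε + ε * Real.exp (aa ε s + cc ε s * n)) :=
    measurable_const.div (measurable_const.add (measurable_const.mul
      (Real.measurable_exp.comp (measurable_const.add (measurable_const.mul measurable_id)))))
  have hR : ∫ ω, 1 / (1 - ε + ε * Real.exp (s / (2 * ε * (1 - ε)) +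
        Real.sqrt (s / (ε * (1 - ε))) * N ω)) ∂P
      = ∫ n, 1 / (1 - ε + ε * Real.exp (aa ε s + cc ε s * n)) ∂(gaussianReal 0 1) := by
    rw [← hNlaw, integral_map hN.aemeasurable hRmeas.aestronglyMeasurable]
    rfl
  rw [hR]
  -- convert everything to Lebesgue integrals with Gaussian density
  have hA1 : (∫ n, (mu1 ε - g ε s (Real.sqrt s * mu1 ε + n)) ^ 2 ∂(gaussianReal 0 1))
      = (1 / (ε * (1 - ε))) * ∫ n : ℝ, (ε / (ε + (1 - ε) * Real.exp (aa ε s - cc ε s * n))) ^ 2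
          * gaussianPDFReal 0 1 n := by
    rw [show (fun n => (mu1 ε - g ε s (Real.sqrt s * mu1 ε + n)) ^ 2)
        = fun n => (1 / (ε * (1 - ε)))
          * (ε / (ε + (1 - ε) * Real.exp (aa ε s - cc ε s * n))) ^ 2 from ?_]
    · rw [integral_const_mul, gauss_int]
    · ext n
      rw [g1 hε hs n, mul_pow, show (mu1 ε - mu2 ε) ^ 2 = (mu2 ε - mu1 ε) ^ 2 by ring,
        mu_sq hε]
  have hA2 : (∫ n, (mu2 ε - g ε s (Real.sqrt s * mu2 ε + n)) ^ 2 ∂(gaussianReal 0 1))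
      = (1 / (ε * (1 - ε))) * ∫ n : ℝ, ((1 - ε) / ((1 - ε)
          + ε * Real.exp (aa ε s + cc ε s * n))) ^ 2 * gaussianPDFReal 0 1 n := by
    rw [show (fun n => (mu2 ε - g ε s (Real.sqrt s * mu2 ε + n)) ^ 2)
        = fun n => (1 / (ε * (1 - ε)))
          * ((1 - ε) / ((1 - ε) + ε * Real.exp (aa ε s + cc ε s * n))) ^ 2 from ?_]
    · rw [integral_const_mul, gauss_int]
    · ext n
      rw [g2 hε hs n, mul_pow, mu_sq hε]
  have hA3 : (∫ n, 1 / (1 - ε + ε * Real.exp (aa ε s + cc ε s * n)) ∂(gaussianReal 0 1))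
      = ∫ n : ℝ, 1 / ((1 - ε) + ε * Real.exp (aa ε s + cc ε s * n))
          * gaussianPDFReal 0 1 n := gauss_int 0 _
  rw [hA1, hA2, hA3]
  have c1 : (1 - ε) * (1 / (ε * (1 - ε))) = 1 / ε := by field_simp; try ring
  have c2 : ε * (1 / (ε * (1 - ε))) = 1 / (1 - ε) := by field_simp; try ring
  rw [← mul_assoc, c1, ← mul_assoc, c2]
  exact gauss_key hε hs
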